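/- For all a ∈ ℕ and all t ≥ a+1, the discounted sum of modified temporal-difference errors telescopes to the interim λ-weighted synthetic gradient: Σ_{b=a}^{t−1} (γλ)^{b−a} δ'_{a,b} = G_a^{λ|t} − u_a. -/
import Mathlib


open Finset Matrix

noncomputable section

/-- Propagator `Pfrom J a n = P(a+n, a) = J_{a+n-1} ⋯ J_a`. -/
def Pfrom {d : ℕ} (J : ℕ → Matrix (Fin d) (Fin d) ℝ) (a : ℕ) : ℕ → Matrix (Fin d) (Fin d) ℝ
  | 0 => 1
  | n + 1 => J (a + n) * Pfrom J a n

/-- Propagator `P J b a = P(b, a) = J_{b-1} ⋯ J_a` (for `b ≥ a`). -/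
def P {d : ℕ} (J : ℕ → Matrix (Fin d) (Fin d) ℝ) (b a : ℕ) : Matrix (Fin d) (Fin d) ℝ :=
  Pfrom J a (b - a)

/-- The n-step synthetic gradient `G_a^{(n)}`. -/
def Gn {d : ℕ} (γ : ℝ) (J : ℕ → Matrix (Fin d) (Fin d) ℝ) (c u : ℕ → Fin d → ℝ)
    (a n : ℕ) : Fin d → ℝ :=
  (∑ k ∈ Finset.range n, γ ^ k • Matrix.vecMul (c (a + k + 1)) (P J (a + k + 1) a))
    + γ ^ n • Matrix.vecMul (u (a + n)) (P J (a + n) a)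

/-- The interim λ-weighted synthetic gradient `G_a^{λ|H}`. -/
def GLam {d : ℕ} (γ lam : ℝ) (J : ℕ → Matrix (Fin d) (Fin d) ℝ) (c u : ℕ → Fin d → ℝ)
    (a H : ℕ) : Fin d → ℝ :=
  (1 - lam) • (∑ n ∈ Finset.range (H - a - 1), lam ^ n • Gn γ J c u a (n + 1))
    + lam ^ (H - a - 1) • Gn γ J c u a (H - a)

/-- The modified temporal-difference error `δ'_{a,t}`. -/
def δ' {d : ℕ} (γ : ℝ) (J : ℕ → Matrix (Fin d) (Fin d) ℝ) (c u : ℕ → Fin d → ℝ)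
    (a t : ℕ) : Fin d → ℝ :=
  Matrix.vecMul (c (t + 1) + γ • u (t + 1)) (P J (t + 1) a) - Matrix.vecMul (u t) (P J t a)

/-- The temporal-difference error `δ_t`. -/
def δtd {d : ℕ} (γ : ℝ) (J : ℕ → Matrix (Fin d) (Fin d) ℝ) (c u w : ℕ → Fin d → ℝ)
    (t : ℕ) : Fin d → ℝ :=
  Matrix.vecMul (c (t + 1) + γ • u (t + 1)) (P J (t + 1) t) - w t

/-- `δ_{a,t} = δ_t P(t,a)`. -/
def δab {d : ℕ} (γ : ℝ) (J : ℕ → Matrix (Fin d) (Fin d) ℝ) (c u w : ℕ → Fin d → ℝ)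
    (a t : ℕ) : Fin d → ℝ :=
  Matrix.vecMul (δtd γ J c u w t) (P J t a)

lemma Gn_succ {d : ℕ} (γ : ℝ) (J : ℕ → Matrix (Fin d) (Fin d) ℝ) (c u : ℕ → Fin d → ℝ)
    (a n : ℕ) :
    Gn γ J c u a (n + 1) = Gn γ J c u a n + γ ^ n • δ' γ J c u a (a + n) := by
  unfold Gn δ'
  rw [Finset.sum_range_succ, Matrix.add_vecMul, Matrix.smul_vecMul,
    show a + (n + 1) = a + n + 1 from rfl]
  module

lemma GLam_succ {d : ℕ} (γ lam : ℝ) (J : ℕ → Matrix (Fin d) (Fin d) ℝ) (c u : ℕ → Fin d → ℝ)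
    (a m : ℕ) (hm : 1 ≤ m) :
    GLam γ lam J c u a (a + m + 1)
      = GLam γ lam J c u a (a + m) + (γ * lam) ^ m • δ' γ J c u a (a + m) := by
  obtain ⟨m, rfl⟩ := Nat.exists_eq_add_of_le hm
  unfold GLam
  have h1 : a + (1 + m) + 1 - a - 1 = m + 1 := by omega
  have h2 : a + (1 + m) + 1 - a = m + 2 := by omega
  have h3 : a + (1 + m) - a - 1 = m := by omega
  have h4 : a + (1 + m) - a = m + 1 := by omega
  rw [h1, h2, h3, h4, Finset.sum_range_succ, Gn_succ γ J c u a (m + 1)]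
  have h5 : a + (m + 1) = a + (1 + m) := by omega
  rw [h5, mul_pow]
  have h6 : (1 : ℕ) + m = m + 1 := by omega
  rw [h6]
  module

lemma sum_range_td {d : ℕ} (γ lam : ℝ) (J : ℕ → Matrix (Fin d) (Fin d) ℝ)
    (c u : ℕ → Fin d → ℝ) (a m : ℕ) (hm : 1 ≤ m) :
    ∑ k ∈ Finset.range m, (γ * lam) ^ k • δ' γ J c u a (a + k)
      = GLam γ lam J c u a (a + m) - u a := by
  induction m, hm using Nat.le_induction with
  | base =>
    rw [Finset.sum_range_one]
    simp only [pow_zero, one_smul]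
    unfold GLam Gn δ'
    have h1 : a + 1 - a - 1 = 0 := by omega
    rw [h1]
    have h2 : a + 1 - a = 1 := by omega
    rw [h2]
    simp [P, Pfrom, Matrix.add_vecMul, Matrix.smul_vecMul]
  | succ m hm ih =>
    rw [Finset.sum_range_succ, ih, show a + (m + 1) = a + m + 1 from rfl,
      GLam_succ γ lam J c u a m hm]
    abel

/-- the discounted sum of modified temporal-difference errors
telescopes to the interim λ-weighted synthetic gradient:
`Σ_{b=a}^{t−1} (γλ)^{b−a} δ'_{a,b} = G_a^{λ|t} − u_a`. -/
theorem discounted_td_telescopes {d : ℕ} (γ lam : ℝ)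
    (J : ℕ → Matrix (Fin d) (Fin d) ℝ) (c u w : ℕ → Fin d → ℝ)
    (a t : ℕ) (h : a + 1 ≤ t) :
    ∑ b ∈ Finset.Icc a (t - 1), (γ * lam) ^ (b - a) • δ' γ J c u a b
      = GLam γ lam J c u a t - u a := by
  obtain ⟨m, hm, rfl⟩ : ∃ m, 1 ≤ m ∧ t = a + m := ⟨t - a, by omega, by omega⟩
  rw [show Finset.Icc a (a + m - 1) = Finset.Ico a (a + m) by
        rw [← Finset.Ico_add_one_right_eq_Icc]; congr 1; omega,
    Finset.sum_Ico_eq_sum_range]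
  have hr : a + m - a = m := by omega
  rw [hr]
  simp only [Nat.add_sub_cancel_left]
  exact sum_range_td γ lam J c u a m hm

end
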